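/- If A = (1, a_1, …, a_k) is an orderly currency and m ≥ 2 is an integer, then the extended currency (1, a_1, …, a_k, m·a_k) is also orderly. -/
import Mathlib


/-- The largest coin of the currency with coins `a 0, …, a k` that is `≤ c`
(or `0` if there is none). -/
def bestCoin (a : ℕ → ℕ) (k : ℕ) (c : ℕ) : ℕ :=
  ((Finset.range (k + 1)).filter fun j => a j ≤ c).sup a

/-- The number of coins used by the greedy algorithm to pay the amount `c`,
using the currency with coins `a 0, …, a k`. -/
def grd (a : ℕ → ℕ) (k : ℕ) : ℕ → ℕ
  | 0 => 0
  | c + 1 =>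
    if h : 1 ≤ bestCoin a k (c + 1) then
      grd a k (c + 1 - bestCoin a k (c + 1)) + 1
    else 0
  decreasing_by omega

/-- The minimal number of coins needed to pay the amount `c`,
using the currency with coins `a 0, …, a k`. -/
noncomputable def opt (a : ℕ → ℕ) (k : ℕ) (c : ℕ) : ℕ :=
  sInf {n | ∃ x : Fin (k + 1) → ℕ, (∑ i, x i) = n ∧ (∑ i, x i * a i.1) = c}

/-- `a 0, …, a k` is a currency: it starts with the coin `1` and is strictly increasing. -/
def IsCurrency (a : ℕ → ℕ) (k : ℕ) : Prop :=
  a 0 = 1 ∧ ∀ i j : ℕ, i < j → j ≤ k → a i < a j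

/-- The currency with coins `a 0, …, a k` is orderly: the greedy payment is
optimal for every positive amount. -/
def Orderly (a : ℕ → ℕ) (k : ℕ) : Prop :=
  ∀ c : ℕ, 0 < c → opt a k c = grd a k c

/-- The set `𝒜(a) = ⋃_{m ≥ 1} {m·a − l : 0 ≤ l ≤ m}`. -/
def calA (a : ℕ) : Set ℕ :=
  {x | ∃ m l : ℕ, 1 ≤ m ∧ l ≤ m ∧ x = m * a - l}

lemma one_le_bestCoin (a : ℕ → ℕ) (k : ℕ) (h0 : a 0 = 1) {c : ℕ} (hc : 1 ≤ c) :
    1 ≤ bestCoin a k c := by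
  have : a 0 ≤ bestCoin a k c :=
    Finset.le_sup (Finset.mem_filter.mpr ⟨Finset.mem_range.mpr (by omega), by omega⟩)
  omega

lemma bestCoin_eq_top (a : ℕ → ℕ) (k : ℕ) (hle : ∀ i ≤ k, a i ≤ a k) {c : ℕ} (hc : a k ≤ c) :
    bestCoin a k c = a k := by
  apply le_antisymm
  · apply Finset.sup_le
    intro j hj
    rw [Finset.mem_filter, Finset.mem_range] at hj
    exact hle j (by omega)
  · exact Finset.le_sup (Finset.mem_filter.mpr ⟨Finset.mem_range.mpr (by omega), hc⟩)

lemma grd_pos (a : ℕ → ℕ) (k : ℕ) (h0 : a 0 = 1) {c : ℕ} (hc : 0 < c) :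
    grd a k c = grd a k (c - bestCoin a k c) + 1 := by
  obtain ⟨c', rfl⟩ := Nat.exists_eq_succ_of_ne_zero hc.ne'
  rw [grd, dif_pos (one_le_bestCoin a k h0 hc)]

lemma opt_zero (a : ℕ → ℕ) (k : ℕ) : opt a k 0 = 0 :=
  Nat.le_zero.mp (Nat.sInf_le ⟨fun _ => 0, by simp, by simp⟩)

lemma exists_rep (a : ℕ → ℕ) (k : ℕ) (h0 : a 0 = 1) (c : ℕ) :
    ∃ x : Fin (k+1) → ℕ, (∑ i, x i) = c ∧ (∑ i, x i * a i.1) = c := by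
  refine ⟨fun i => if i = 0 then c else 0, by simp, ?_⟩
  rw [Finset.sum_eq_single 0]
  · simp [h0]
  · intro i _ hi; simp [hi]
  · simp

lemma opt_spec (a : ℕ → ℕ) (k : ℕ) (h0 : a 0 = 1) (c : ℕ) :
    ∃ x : Fin (k+1) → ℕ, (∑ i, x i) = opt a k c ∧ (∑ i, x i * a i.1) = c :=
  Nat.sInf_mem (⟨c, exists_rep a k h0 c⟩ :
    {n | ∃ x : Fin (k + 1) → ℕ, (∑ i, x i) = n ∧ (∑ i, x i * a i.1) = c}.Nonempty)

lemma bestCoin_ext_lt (a : ℕ → ℕ) (k : ℕ) (b : ℕ → ℕ) (hb : ∀ i ≤ k, b i = a i)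
    (B : ℕ) (hB : b (k+1) = B) {c : ℕ} (hc : c < B) :
    bestCoin b (k+1) c = bestCoin a k c := by
  apply le_antisymm
  · apply Finset.sup_le
    intro j hj
    rw [Finset.mem_filter, Finset.mem_range] at hj
    rcases Nat.lt_or_ge j (k+1) with h | h
    · rw [hb j (by omega)] at hj ⊢
      exact Finset.le_sup (Finset.mem_filter.mpr ⟨Finset.mem_range.mpr h, hj.2⟩)
    · have hj1 : j = k + 1 := by omega
      rw [hj1, hB] at hj
      omega
  · apply Finset.sup_le
    intro j hj
    rw [Finset.mem_filter, Finset.mem_range] at hj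
    have hbj := hb j (by omega)
    calc a j = b j := (hbj).symm
      _ ≤ _ := Finset.le_sup
        (Finset.mem_filter.mpr ⟨Finset.mem_range.mpr (by omega), by rw [hbj]; exact hj.2⟩)

lemma grd_ext_lt (a : ℕ → ℕ) (k : ℕ) (b : ℕ → ℕ) (hb : ∀ i ≤ k, b i = a i)
    (h0 : a 0 = 1) (B : ℕ) (hB : b (k+1) = B) :
    ∀ c, c < B → grd b (k+1) c = grd a k c := by
  intro c
  induction c using Nat.strong_induction_on with
  | _ c ih =>
    intro hc
    rcases Nat.eq_zero_or_pos c with rfl | hpos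
    · simp [grd]
    · have hb0 : b 0 = 1 := by rw [hb 0 (Nat.zero_le _), h0]
      have hbe := bestCoin_ext_lt a k b hb B hB hc
      rw [grd_pos b (k+1) hb0 hpos, grd_pos a k h0 hpos, hbe]
      have h1 : 1 ≤ bestCoin a k c := one_le_bestCoin a k h0 hpos
      congr 1
      exact ih _ (by omega) (by omega)

lemma grd_top_steps (a : ℕ → ℕ) (k : ℕ) (h0 : a 0 = 1) (hle : ∀ i ≤ k, a i ≤ a k)
    (hak : 1 ≤ a k) :
    ∀ t c, t * a k ≤ c → grd a k c = grd a k (c - t * a k) + t := by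
  intro t
  induction t with
  | zero => simp
  | succ t ih =>
    intro c hc
    have he : (t+1) * a k = t * a k + a k := by ring
    have h1 : a k ≤ c := by omega
    have hpos : 0 < c := by omega
    rw [grd_pos a k h0 hpos, bestCoin_eq_top a k hle h1, ih (c - a k) (by omega)]
    have h2 : c - a k - t * a k = c - (t+1) * a k := by omega
    rw [h2]
    ring

lemma opt_ext_le (a : ℕ → ℕ) (k : ℕ) (b : ℕ → ℕ) (hb : ∀ i ≤ k, b i = a i)
    (h0 : a 0 = 1) (c : ℕ) :
    opt b (k+1) c ≤ opt a k c := by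
  obtain ⟨x, hs, hv⟩ := opt_spec a k h0 c
  apply Nat.sInf_le
  refine ⟨Fin.snoc x 0, ?_, ?_⟩
  · rw [Fin.sum_univ_castSucc]
    simp [hs]
  · rw [Fin.sum_univ_castSucc]
    simp only [Fin.snoc_castSucc, Fin.snoc_last, zero_mul, add_zero]
    rw [← hv]
    apply Finset.sum_congr rfl
    intro i _
    have : ((Fin.castSucc i : Fin (k+2)) : ℕ) = (i : ℕ) := rfl
    rw [this, hb i.1 (by omega)]

lemma opt_le_ext (a : ℕ → ℕ) (k : ℕ) (b : ℕ → ℕ) (hb : ∀ i ≤ k, b i = a i)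
    (hb0 : b 0 = 1) (B : ℕ) (hB : b (k+1) = B) {c : ℕ} (hc : c < B) :
    opt a k c ≤ opt b (k+1) c := by
  obtain ⟨y, hs, hv⟩ := opt_spec b (k+1) hb0 c
  have hlast : y (Fin.last (k+1)) = 0 := by
    by_contra h
    have h1 : 1 ≤ y (Fin.last (k+1)) := Nat.one_le_iff_ne_zero.mpr h
    have h2 : y (Fin.last (k+1)) * b ((Fin.last (k+1)) : ℕ) ≤ c := by
      rw [← hv]
      exact Finset.single_le_sum (f := fun i : Fin (k+2) => y i * b i.1)
        (fun i _ => Nat.zero_le _) (Finset.mem_univ (Fin.last (k+1)))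
    have h3 : b ((Fin.last (k+1)) : ℕ) = B := by
      have : ((Fin.last (k+1)) : ℕ) = k + 1 := rfl
      rw [this, hB]
    rw [h3] at h2
    nlinarith
  rw [Fin.sum_univ_castSucc] at hs hv
  rw [hlast, add_zero] at hs
  rw [hlast, zero_mul, add_zero] at hv
  apply Nat.sInf_le
  refine ⟨fun i => y (Fin.castSucc i), hs, ?_⟩
  rw [← hv]
  apply Finset.sum_congr rfl
  intro i _
  have h4 : ((Fin.castSucc i : Fin (k+2)) : ℕ) = (i : ℕ) := rfl
  rw [h4, hb i.1 (by omega)]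

/-- An orderly currency extended by any multiple `m * a k` (`m ≥ 2`) of its
highest coin remains orderly. -/
theorem extend_by_multiple_orderly (a : ℕ → ℕ) (k : ℕ)
    (hcur : IsCurrency a k) (hord : Orderly a k)
    (m : ℕ) (hm : 2 ≤ m) :
    Orderly (fun i => if i ≤ k then a i else m * a k) (k + 1) := by
  obtain ⟨h0, hmono⟩ := hcur
  set b : ℕ → ℕ := fun i => if i ≤ k then a i else m * a k with hbdef
  have hb : ∀ i ≤ k, b i = a i := fun i hi => if_pos hi
  have hB : b (k+1) = m * a k := if_neg (by omega)
  have hle : ∀ i ≤ k, a i ≤ a k := by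
    intro i hi
    rcases Nat.lt_or_ge i k with h | h
    · exact (hmono i k h le_rfl).le
    · have : i = k := by omega
      rw [this]
  have hak : 1 ≤ a k := by have := hle 0 (Nat.zero_le k); omega
  have hb0 : b 0 = 1 := by rw [hb 0 (Nat.zero_le k), h0]
  set B := m * a k with hBdef
  have hB0 : 0 < B := by positivity
  intro c
  induction c using Nat.strong_induction_on with
  | _ c ih =>
    intro hc
    rcases Nat.lt_or_ge c B with hlt | hge
    · have e1 : opt b (k+1) c = opt a k c :=
        le_antisymm (opt_ext_le a k b hb h0 c) (opt_le_ext a k b hb hb0 B hB hlt)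
      rw [e1, hord c hc, grd_ext_lt a k b hb h0 B hB c hlt]
    · -- c ≥ B
      have hbtop : ∀ i ≤ k + 1, b i ≤ b (k+1) := by
        intro i hi
        rcases Nat.lt_or_ge i (k+1) with h | h
        · rw [hb i (by omega), hB]
          calc a i ≤ a k := hle i (by omega)
            _ ≤ m * a k := Nat.le_mul_of_pos_left _ (by omega)
        · have : i = k + 1 := by omega
          rw [this]
      have hgrd : grd b (k+1) c = grd b (k+1) (c - B) + 1 := by
        rw [grd_pos b (k+1) hb0 (by omega)]
        rw [bestCoin_eq_top b (k+1) hbtop (by rw [hB]; exact hge), hB]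
      -- upper bound
      obtain ⟨y, hys, hyv⟩ := opt_spec b (k+1) hb0 (c - B)
      have hup : opt b (k+1) c ≤ opt b (k+1) (c - B) + 1 := by
        apply Nat.sInf_le
        refine ⟨fun i => y i + (if i = Fin.last (k+1) then 1 else 0), ?_, ?_⟩
        · rw [Finset.sum_add_distrib, hys]
          simp
        · have : ∀ i : Fin (k+2),
              (y i + (if i = Fin.last (k+1) then 1 else 0)) * b i.1
              = y i * b i.1 + (if i = Fin.last (k+1) then b i.1 else 0) := by
            intro i
            rcases eq_or_ne i (Fin.last (k+1)) with h | h <;> simp [h, add_mul]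
          rw [Finset.sum_congr rfl (fun i _ => this i), Finset.sum_add_distrib, hyv,
            Finset.sum_ite_eq' Finset.univ (Fin.last (k+1)) (fun i => b i.1)]
          simp only [Finset.mem_univ, if_true]
          have : b ((Fin.last (k+1)) : ℕ) = B := by
            have h5 : ((Fin.last (k+1)) : ℕ) = k + 1 := rfl
            rw [h5, hB]
          rw [this]
          omega
      -- lower bound
      have hlow : opt b (k+1) (c - B) + 1 ≤ opt b (k+1) c := by
        obtain ⟨z, hzs, hzv⟩ := opt_spec b (k+1) hb0 c
        rw [Fin.sum_univ_castSucc] at hzs hzv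
        have hblast : b ((Fin.last (k+1)) : ℕ) = B := by
          have h5 : ((Fin.last (k+1)) : ℕ) = k + 1 := rfl
          rw [h5, hB]
        rcases Nat.eq_zero_or_pos (z (Fin.last (k+1))) with hz0 | hz1
        · -- no big coin used
          have hrep : opt a k c ≤ opt b (k+1) c := by
            apply Nat.sInf_le
            refine ⟨fun i => z (Fin.castSucc i), by rw [← hzs, hz0, add_zero], ?_⟩
            rw [← hzv, hz0, zero_mul, add_zero]
            apply Finset.sum_congr rfl
            intro i _
            have h4 : ((Fin.castSucc i : Fin (k+2)) : ℕ) = (i : ℕ) := rfl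
            rw [h4, hb i.1 (by omega)]
          have hgrda : opt a k c = grd a k (c - B) + m := by
            rw [hord c hc]
            exact grd_top_steps a k h0 hle hak m c hge
          have hgb : opt b (k+1) (c - B) ≤ grd a k (c - B) := by
            rcases Nat.eq_zero_or_pos (c - B) with h | h
            · rw [h]
              simp [grd, opt_zero]
            · calc opt b (k+1) (c - B) ≤ opt a k (c - B) := opt_ext_le a k b hb h0 _
                _ = grd a k (c - B) := hord _ h
          omega
        · -- big coin used at least once
          set zl := z (Fin.last (k+1)) with hzl
          have hsub : opt b (k+1) (c - B) ≤ opt b (k+1) c - 1 := by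
            apply Nat.sInf_le
            refine ⟨Fin.snoc (fun i : Fin (k+1) => z (Fin.castSucc i)) (zl - 1), ?_, ?_⟩
            · rw [Fin.sum_univ_castSucc]
              simp only [Fin.snoc_castSucc, Fin.snoc_last]
              omega
            · rw [Fin.sum_univ_castSucc]
              simp only [Fin.snoc_castSucc, Fin.snoc_last]
              rw [hblast] at hzv ⊢
              have hmul : (zl - 1) * B = zl * B - B := by
                rw [Nat.sub_mul, one_mul]
              have hzB : B ≤ zl * B := Nat.le_mul_of_pos_left _ hz1
              omega
          have hpos1 : 1 ≤ opt b (k+1) c := by omega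
          omega
      have hcB : opt b (k+1) (c - B) = grd b (k+1) (c - B) := by
        rcases Nat.eq_zero_or_pos (c - B) with h | h
        · rw [h, opt_zero]
          simp [grd]
        · exact ih (c - B) (by omega) h
      omega
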